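/- Let f : ℝⁿ → ℝᵐ, x̄ ∈ ℝⁿ and η ≥ 0. If f admits a strict η-estimator h at x̄ (i.e. h(x̄) = f(x̄) and lip(f − h, x̄) ≤ η) and inj(h, x̄) > η, then f is metrically injective around x̄ with inj(f, x̄) ≥ inj(h, x̄) − η. -/

import Mathlib

open Metric Set
open scoped ENNReal NNReal

noncomputable section

variable {E F : Type*} [NormedAddCommGroup E] [NormedAddCommGroup F]

/-- `f` is `α`-covering at `x`: for every `ε > 0` there is `r ∈ (0, ε]` with
`B̄(f x, α r) ⊆ f (B̄(x, r))`. -/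
def AlphaCoveringAt (f : E → F) (x : E) (α : ℝ) : Prop :=
  ∀ ε > (0:ℝ), ∃ r : ℝ, 0 < r ∧ r ≤ ε ∧
    closedBall (f x) (α * r) ⊆ f '' closedBall x r

/-- The covering bound `cov(f, x)`: supremum of all `α > 0` for which `f` is
`α`-covering at `x`. -/
def covBound (f : E → F) (x : E) : ℝ≥0∞ :=
  ⨆ (α : ℝ≥0) (_ : 0 < α ∧ AlphaCoveringAt f x (α : ℝ)), (α : ℝ≥0∞)

/-- `f` is linearly open around `xb` with constant `α`. -/
def LinOpenWith (f : E → F) (xb : E) (α : ℝ) : Prop :=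
  ∃ U ∈ nhds xb, ∃ V ∈ nhds (f xb), ∀ x ∈ U, ∀ r > (0:ℝ),
    ball (f x) (α * r) ∩ V ⊆ f '' ball x r

/-- The exact linear openness bound `lop(f, xb)` (`0` if no constant works). -/
def lopBound (f : E → F) (xb : E) : ℝ≥0∞ :=
  ⨆ (α : ℝ≥0) (_ : 0 < α ∧ LinOpenWith f xb (α : ℝ)), (α : ℝ≥0∞)

/-- `ℓ` is a Lipschitz constant of `h` on some neighbourhood of `xb`. -/
def IsLipConstAround (h : E → F) (xb : E) (ℓ : ℝ) : Prop :=
  ∃ U ∈ nhds xb, ∀ x₁ ∈ U, ∀ x₂ ∈ U, ‖h x₁ - h x₂‖ ≤ ℓ * ‖x₁ - x₂‖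

/-- `lip(h, xb)`: infimum of all `ℓ > 0` which are Lipschitz constants of `h`
on some neighbourhood of `xb` (`∞` if `h` is not locally Lipschitz at `xb`). -/
def lipBound (h : E → F) (xb : E) : ℝ≥0∞ :=
  ⨅ (ℓ : ℝ≥0) (_ : 0 < ℓ ∧ IsLipConstAround h xb (ℓ : ℝ)), (ℓ : ℝ≥0∞)

/-- `β` is a metric injectivity constant for `g` on some closed ball around `xb`. -/
def IsInjConstAround (g : E → F) (xb : E) (β : ℝ) : Prop :=
  ∃ δ > (0:ℝ), ∀ x₁ ∈ closedBall xb δ, ∀ x₂ ∈ closedBall xb δ,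
    β * ‖x₁ - x₂‖ ≤ ‖g x₁ - g x₂‖

/-- `g` is metrically injective around `xb`. -/
def MetricallyInjectiveAround (g : E → F) (xb : E) : Prop :=
  ∃ β > (0:ℝ), IsInjConstAround g xb β

/-- The metric injection bound `inj(g, xb)`: supremum of all valid `β > 0`. -/
def injBound (g : E → F) (xb : E) : ℝ≥0∞ :=
  ⨆ (β : ℝ≥0) (_ : 0 < β ∧ IsInjConstAround g xb (β : ℝ)), (β : ℝ≥0∞)

/-- `h` is a strict `μ`-estimator of `f` at `xb`: `h xb = f xb` and
`lip(f - h, xb) ≤ μ`. -/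
def IsStrictEstimator (f h : E → F) (xb : E) (μ : ℝ≥0) : Prop :=
  h xb = f xb ∧ lipBound (fun x => f x - h x) xb ≤ (μ : ℝ≥0∞)

/-- `g` is strongly (metrically) regular around `xb`: it is linearly open around
`xb` and the set-valued inverse `g⁻¹` has a single-valued graphical localization
around `(g xb, xb)`. -/
def StronglyRegularAround (g : E → F) (xb : E) : Prop :=
  (∃ α > (0:ℝ), LinOpenWith g xb α) ∧
  ∃ V ∈ nhds (g xb), ∃ U ∈ nhds xb, ∀ y ∈ V, ∃ x : E, g ⁻¹' {y} ∩ U = {x}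

/-- Key lemma: transfer an injectivity constant from `h` to `f`. -/
lemma key_transfer {E F : Type*} [NormedAddCommGroup E] [NormedAddCommGroup F]
    (f h : E → F) (xb : E) (η β γ : ℝ≥0)
    (hlip : lipBound (fun x => f x - h x) xb ≤ (η : ℝ≥0∞))
    (hβ : IsInjConstAround h xb (β : ℝ))
    (h1 : η < γ) (h2 : γ < β) :
    IsInjConstAround f xb ((β - γ : ℝ≥0) : ℝ) := by
  have hlt : lipBound (fun x => f x - h x) xb < (γ : ℝ≥0∞) :=
    lt_of_le_of_lt hlip (by exact_mod_cast h1)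
  rw [lipBound, iInf_lt_iff] at hlt
  obtain ⟨ℓ, hℓ⟩ := hlt
  rw [iInf_lt_iff] at hℓ
  obtain ⟨⟨hℓpos, U, hU, hUlip⟩, hℓγ⟩ := hℓ
  have hℓγ' : (ℓ : ℝ) < γ := by exact_mod_cast hℓγ
  obtain ⟨δ₁, hδ₁, hinj⟩ := hβ
  obtain ⟨δ₂, hδ₂, hball⟩ := Metric.mem_nhds_iff.1 hU
  refine ⟨min δ₁ (δ₂ / 2), lt_min hδ₁ (by linarith), ?_⟩
  intro x₁ hx₁ x₂ hx₂
  have hx₁' : x₁ ∈ closedBall xb δ₁ :=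
    closedBall_subset_closedBall (min_le_left _ _) hx₁
  have hx₂' : x₂ ∈ closedBall xb δ₁ :=
    closedBall_subset_closedBall (min_le_left _ _) hx₂
  have hx₁U : x₁ ∈ U := hball <| by
    have := closedBall_subset_closedBall (min_le_right δ₁ (δ₂ / 2)) hx₁
    exact lt_of_le_of_lt (mem_closedBall.1 this) (by linarith)
  have hx₂U : x₂ ∈ U := hball <| by
    have := closedBall_subset_closedBall (min_le_right δ₁ (δ₂ / 2)) hx₂
    exact lt_of_le_of_lt (mem_closedBall.1 this) (by linarith)
  have hh : (β : ℝ) * ‖x₁ - x₂‖ ≤ ‖h x₁ - h x₂‖ := hinj x₁ hx₁' x₂ hx₂'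
  have hlipx : ‖(f x₁ - h x₁) - (f x₂ - h x₂)‖ ≤ (ℓ : ℝ) * ‖x₁ - x₂‖ :=
    hUlip x₁ hx₁U x₂ hx₂U
  have htri : ‖h x₁ - h x₂‖ ≤ ‖f x₁ - f x₂‖ + ‖(f x₁ - h x₁) - (f x₂ - h x₂)‖ := by
    have : h x₁ - h x₂ = (f x₁ - f x₂) - ((f x₁ - h x₁) - (f x₂ - h x₂)) := by abel
    rw [this]
    exact norm_sub_le _ _
  have hcoe : ((β - γ : ℝ≥0) : ℝ) = (β : ℝ) - γ := by
    rw [NNReal.coe_sub h2.le]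
  rw [hcoe]
  nlinarith [norm_nonneg (x₁ - x₂)]

/-- Metric injectivity via strict estimators: if `f` admits a strict
`η`-estimator `h` at `xb` with `inj(h, xb) > η`, then `f` is metrically
injective around `xb` with `inj(f, xb) ≥ inj(h, xb) - η`. -/
theorem stmt4 (n m : ℕ)
    (f h : EuclideanSpace ℝ (Fin n) → EuclideanSpace ℝ (Fin m))
    (xb : EuclideanSpace ℝ (Fin n)) (η : ℝ≥0)
    (hest : IsStrictEstimator f h xb η)
    (hgt : (η : ℝ≥0∞) < injBound h xb) :
    MetricallyInjectiveAround f xb ∧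
    injBound h xb - (η : ℝ≥0∞) ≤ injBound f xb := by
  obtain ⟨-, hlip⟩ := hest
  -- helper: get an injectivity constant for f from one for h
  have hmain : ∀ β γ : ℝ≥0, IsInjConstAround h xb (β : ℝ) → η < γ → γ < β →
      ((β - γ : ℝ≥0) : ℝ≥0∞) ≤ injBound f xb := by
    intro β γ hβ h1 h2
    have hinjf := key_transfer f h xb η β γ hlip hβ h1 h2
    have hpos : 0 < β - γ := tsub_pos_of_lt h2
    exact le_iSup_of_le (β - γ) (le_iSup_of_le ⟨hpos, hinjf⟩ le_rfl)
  rw [injBound, lt_iSup_iff] at hgt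
  obtain ⟨β, hβ⟩ := hgt
  rw [lt_iSup_iff] at hβ
  obtain ⟨⟨hβpos, hβinj⟩, hηβ⟩ := hβ
  have hηβ' : η < β := by exact_mod_cast hηβ
  constructor
  · -- metric injectivity: use γ = (η + β)/2
    set γ : ℝ≥0 := (η + β) / 2 with hγ
    have h1 : η < γ := by
      rw [hγ]
      rw [← NNReal.coe_lt_coe] at hηβ' ⊢
      push_cast
      linarith
    have h2 : γ < β := by
      rw [hγ]
      rw [← NNReal.coe_lt_coe] at hηβ' ⊢
      push_cast
      linarith
    have hinjf := key_transfer f h xb η β γ hlip hβinj h1 h2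
    have hpos : (0:ℝ) < ((β - γ : ℝ≥0) : ℝ) := by
      rw [NNReal.coe_sub h2.le]
      rw [← NNReal.coe_lt_coe] at h2
      linarith
    exact ⟨_, hpos, hinjf⟩
  · -- the bound
    rw [injBound]
    rw [tsub_le_iff_right, iSup_le_iff]
    intro β' 
    rw [iSup_le_iff]
    rintro ⟨hβ'pos, hβ'inj⟩
    rcases le_or_gt (β' : ℝ≥0∞) (η : ℝ≥0∞) with hle | hlt
    · exact hle.trans le_add_self
    · have hηβ'' : η < β' := by exact_mod_cast hlt
      have hsub : (β' : ℝ≥0∞) - η ≤ injBound f xb := by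
        refine le_of_forall_lt ?_
        intro c hc
        have hcβ : c < (β' : ℝ≥0∞) := lt_of_lt_of_le hc tsub_le_self
        lift c to ℝ≥0 using hcβ.ne_top
        rw [← ENNReal.coe_sub, ENNReal.coe_lt_coe] at hc
        have hcr : (c : ℝ) < (β' : ℝ) - η := by
          have := (NNReal.coe_lt_coe.2 hc)
          rwa [NNReal.coe_sub hηβ''.le] at this
        have hηr : (η : ℝ) < (β' : ℝ) - c := by linarith
        set γr : ℝ := ((η : ℝ) + ((β' : ℝ) - c)) / 2 with hγr
        have hγr0 : 0 ≤ γr := by have := η.coe_nonneg; rw [hγr]; linarith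
        set γ : ℝ≥0 := ⟨γr, hγr0⟩ with hγdef
        have hγcoe : (γ : ℝ) = γr := rfl
        have h1 : η < γ := by
          rw [← NNReal.coe_lt_coe, hγcoe, hγr]; linarith
        have h2 : γ < β' := by
          rw [← NNReal.coe_lt_coe, hγcoe, hγr]
          have : (0:ℝ) ≤ c := c.coe_nonneg
          linarith
        have hkey := hmain β' γ hβ'inj h1 h2
        refine lt_of_lt_of_le ?_ hkey
        rw [ENNReal.coe_lt_coe, ← NNReal.coe_lt_coe, NNReal.coe_sub h2.le, hγcoe, hγr]
        linarith
      calc (β' : ℝ≥0∞) = (β' : ℝ≥0∞) - η + η := (tsub_add_cancel_of_le hlt.le).symm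
        _ ≤ injBound f xb + η := add_le_add_left hsub _
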